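/- Let ε > 0 and let G be a connected graph with n vertices and maximum degree at most d ≥ 2. Suppose the restricted Cheeger constant satisfies h_{εn}(G) > 1. Then for every integer s with 1 ≤ s ≤ εn/(2d) and every vertex v ∈ V(G), there exists a connected subset X ⊆ V(G) with |X| = s, v ∈ X, and |N(X)| ≥ |X|·(h_{εn}(G) − 1). -/

import Mathlib

open Finset

/-- Number of edges of `G` between disjoint sets `A` and `B`. -/
def eBetween {V : Type*} [DecidableEq V] (G : SimpleGraph V) [DecidableRel G.Adj]
    (A B : Finset V) : ℕ :=
  ((A ×ˢ B).filter fun p => G.Adj p.1 p.2).card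

/-- The external neighbourhood of a set `X`. -/
def extNbhd {V : Type*} [Fintype V] [DecidableEq V] (G : SimpleGraph V)
    [DecidableRel G.Adj] (X : Finset V) : Finset V :=
  univ.filter fun v => v ∉ X ∧ ∃ u ∈ X, G.Adj u v

/-- The restricted Cheeger constant `h_k(G) = min{e(S, V\S)/|S| : 0 < |S| ≤ k}`. -/
noncomputable def rCheeger {V : Type*} [Fintype V] [DecidableEq V] (G : SimpleGraph V)
    [DecidableRel G.Adj] (k : ℝ) : ℝ :=
  sInf {x : ℝ | ∃ S : Finset V, S.Nonempty ∧ (S.card : ℝ) ≤ k ∧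
    x = (eBetween G S Sᶜ : ℝ) / S.card}

section aux
variable {V : Type*} [Fintype V] [DecidableEq V] (G : SimpleGraph V) [DecidableRel G.Adj]

lemma eBetween_eq_sum (A B : Finset V) :
    eBetween G A B = ∑ a ∈ A, (B.filter (G.Adj a)).card := by
  unfold eBetween
  rw [Finset.card_filter, Finset.sum_product]
  exact sum_congr rfl fun a _ => (Finset.card_filter _ _).symm

lemma mem_extNbhd {X : Finset V} {u : V} :
    u ∈ extNbhd G X ↔ u ∉ X ∧ ∃ x ∈ X, G.Adj x u := by
  simp [extNbhd]

lemma rCheeger_le_mul (k : ℝ) (S : Finset V) (hS : S.Nonempty) (hSk : (S.card : ℝ) ≤ k) :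
    rCheeger G k * S.card ≤ (eBetween G S Sᶜ : ℝ) := by
  have hpos : (0:ℝ) < S.card := by exact_mod_cast Finset.card_pos.2 hS
  have hbdd : BddBelow {x : ℝ | ∃ S : Finset V, S.Nonempty ∧ (S.card : ℝ) ≤ k ∧
      x = (eBetween G S Sᶜ : ℝ) / S.card} := by
    refine ⟨0, ?_⟩
    rintro x ⟨T, hT, -, rfl⟩
    positivity
  have hle : rCheeger G k ≤ (eBetween G S Sᶜ : ℝ) / S.card :=
    csInf_le hbdd ⟨S, hS, hSk, rfl⟩
  calc rCheeger G k * S.card ≤ ((eBetween G S Sᶜ : ℝ) / S.card) * S.card := by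
        exact mul_le_mul_of_nonneg_right hle hpos.le
    _ = (eBetween G S Sᶜ : ℝ) := by field_simp

lemma extNbhd_card_le (d : ℕ) (hdeg : ∀ v : V, G.degree v ≤ d) (X : Finset V) :
    (extNbhd G X).card ≤ d * X.card := by
  have hsub : extNbhd G X ⊆ X.biUnion (fun x => G.neighborFinset x) := by
    intro u hu
    rw [mem_extNbhd] at hu
    obtain ⟨-, x, hx, hadj⟩ := hu
    exact mem_biUnion.2 ⟨x, hx, by simpa [SimpleGraph.mem_neighborFinset] using hadj⟩
  calc (extNbhd G X).card ≤ (X.biUnion fun x => G.neighborFinset x).card := card_le_card hsub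
    _ ≤ ∑ x ∈ X, (G.neighborFinset x).card := card_biUnion_le
    _ ≤ ∑ _x ∈ X, d := sum_le_sum fun x _ => by
        simpa [SimpleGraph.card_neighborFinset_eq_degree] using hdeg x
    _ = X.card * d := by rw [sum_const, smul_eq_mul]
    _ = d * X.card := mul_comm _ _

lemma induce_singleton_connected (v : V) : (G.induce ({v} : Set V)).Connected := by
  rw [SimpleGraph.connected_iff]
  refine ⟨?_, ⟨⟨v, rfl⟩⟩⟩
  rintro ⟨a, ha⟩ ⟨b, hb⟩
  simp only [Set.mem_singleton_iff] at ha hb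
  subst ha; subst hb
  exact SimpleGraph.Reachable.refl _

lemma eBetween_singleton (v : V) : eBetween G {v} ({v}ᶜ : Finset V) = G.degree v := by
  rw [eBetween_eq_sum, sum_singleton]
  congr 1
  ext b
  simp only [mem_filter, mem_compl, mem_singleton, SimpleGraph.mem_neighborFinset]
  constructor
  · rintro ⟨-, h⟩; exact h
  · intro h; exact ⟨fun hb => by subst hb; exact G.loopless.irrefl _ h, h⟩

lemma extNbhd_singleton (v : V) : extNbhd G {v} = G.neighborFinset v := by
  ext u
  rw [mem_extNbhd]
  simp only [mem_singleton, SimpleGraph.mem_neighborFinset]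
  constructor
  · rintro ⟨-, x, rfl, h⟩; exact h
  · intro h; exact ⟨fun hu => by subst hu; exact G.loopless.irrefl _ h, v, rfl, h⟩

end aux

set_option maxHeartbeats 1000000

/-- If `G` is connected with maximum degree at most `d ≥ 2` and `h_{εn}(G) > 1`,
then for every `1 ≤ s ≤ εn/(2d)` and every vertex `v` there is a connected set `X`
of size `s` containing `v` with `|N(X)| ≥ |X|(h_{εn}(G) − 1)`. -/
theorem stmt_3 {V : Type*} [Fintype V] [DecidableEq V]
    (G : SimpleGraph V) [DecidableRel G.Adj] (hG : G.Connected)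
    (ε : ℝ) (hε : 0 < ε) (d : ℕ) (hd : 2 ≤ d) (hdeg : ∀ v : V, G.degree v ≤ d)
    (hch : 1 < rCheeger G (ε * Fintype.card V))
    (s : ℕ) (hs1 : 1 ≤ s) (hs2 : (s : ℝ) ≤ ε * Fintype.card V / (2 * d)) (v : V) :
    ∃ X : Finset V, v ∈ X ∧ X.card = s ∧ (G.induce (X : Set V)).Connected ∧
      (s : ℝ) * (rCheeger G (ε * Fintype.card V) - 1) ≤ ((extNbhd G X).card : ℝ) := by
  set k : ℝ := ε * Fintype.card V with hk
  set h : ℝ := rCheeger G k with hh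
  have hd0 : (2:ℝ) ≤ (d:ℝ) := by exact_mod_cast hd
  have h2d : (0:ℝ) < 2*(d:ℝ) := by linarith
  have hs0 : (1:ℝ) ≤ (s:ℝ) := by exact_mod_cast hs1
  have hds : 2*(d:ℝ)*(s:ℝ) ≤ k := by
    nlinarith [(le_div_iff₀ h2d).1 hs2]
  have key : ∀ i : ℕ, 1 ≤ i → i ≤ s → ∃ X : Finset V, v ∈ X ∧ X.card = i ∧
      (G.induce (X : Set V)).Connected ∧ (i : ℝ) * (h - 1) ≤ ((extNbhd G X).card : ℝ) := by
    intro i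
    induction i with
    | zero => omega
    | succ j ih =>
      intro _ hle
      rcases Nat.eq_zero_or_pos j with hj0 | hj1
      · -- base case: X = {v}
        subst hj0
        refine ⟨{v}, mem_singleton_self v, card_singleton v, ?_, ?_⟩
        · rw [coe_singleton]; exact induce_singleton_connected G v
        · have h1k : ((({v} : Finset V).card : ℝ)) ≤ k := by
            rw [card_singleton]; push_cast; nlinarith
          have hc := rCheeger_le_mul G k {v} (singleton_nonempty v) h1k
          rw [eBetween_singleton, card_singleton] at hc
          rw [extNbhd_singleton, SimpleGraph.card_neighborFinset_eq_degree]
          push_cast at hc ⊢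
          linarith
      · -- inductive step
        obtain ⟨X, hvX, hcard, hconn, hm⟩ := ih hj1 (by omega)
        have hjle : (j:ℝ) ≤ (s:ℝ) := by exact_mod_cast (by omega : j ≤ s)
        have hj1' : (1:ℝ) ≤ (j:ℝ) := by exact_mod_cast hj1
        set N : Finset V := extNbhd G X with hN
        set Y : Finset V := X ∪ N with hY
        have hdisj : Disjoint X N := by
          rw [Finset.disjoint_left]
          intro a haX haN
          exact ((mem_extNbhd G).1 haN).1 haX
        have hYcard : Y.card = j + N.card := by
          rw [hY, card_union_of_disjoint hdisj, hcard]
        have hNled : (N.card : ℝ) ≤ (d:ℝ) * (j:ℝ) := by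
          have := extNbhd_card_le G d hdeg X
          rw [hcard] at this
          exact_mod_cast this
        have hYk : (Y.card : ℝ) ≤ k := by
          rw [hYcard]; push_cast; nlinarith
        have hXk : ((X.card : ℝ)) ≤ k := by
          rw [hcard]; nlinarith
        have hchX := rCheeger_le_mul G k X ⟨v, hvX⟩ hXk
        have hNne : N.Nonempty := by
          rcases N.eq_empty_or_nonempty with hNe | hNe
          · exfalso
            have hzero : eBetween G X Xᶜ = 0 := by
              rw [eBetween_eq_sum]
              refine sum_eq_zero fun a haX => ?_
              rw [card_eq_zero, filter_eq_empty_iff]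
              intro b hb hadj
              have hbN : b ∈ N := (mem_extNbhd G).2 ⟨mem_compl.1 hb, a, haX, hadj⟩
              rw [hNe] at hbN
              exact absurd hbN (notMem_empty b)
            rw [hzero, hcard] at hchX
            push_cast at hchX
            nlinarith
          · exact hNe
        have hexists : ∃ u ∈ N, h ≤ (((Yᶜ : Finset V).filter (G.Adj u)).card : ℝ) := by
          by_contra hall
          push_neg at hall
          have hYne : Y.Nonempty := ⟨v, by rw [hY]; exact mem_union_left _ hvX⟩
          have hchY := rCheeger_le_mul G k Y hYne hYk
          have hEY : eBetween G Y Yᶜ = ∑ u ∈ N, ((Yᶜ : Finset V).filter (G.Adj u)).card := by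
            rw [eBetween_eq_sum]
            have hsplit : ∑ a ∈ Y, ((Yᶜ : Finset V).filter (G.Adj a)).card
                = ∑ a ∈ X, ((Yᶜ : Finset V).filter (G.Adj a)).card
                + ∑ a ∈ N, ((Yᶜ : Finset V).filter (G.Adj a)).card := by
              rw [hY, sum_union hdisj]
            rw [hsplit]
            have hXzero : ∑ a ∈ X, ((Yᶜ : Finset V).filter (G.Adj a)).card = 0 := by
              refine sum_eq_zero fun a haX => ?_
              rw [card_eq_zero, filter_eq_empty_iff]
              intro b hb hadj
              have hbY : b ∉ Y := mem_compl.1 hb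
              have hbX : b ∉ X := fun hc => hbY (by rw [hY]; exact mem_union_left _ hc)
              have hbN : b ∈ N := (mem_extNbhd G).2 ⟨hbX, a, haX, hadj⟩
              exact hbY (by rw [hY]; exact mem_union_right _ hbN)
            rw [hXzero, zero_add]
          have hlt : (eBetween G Y Yᶜ : ℝ) < h * (N.card : ℝ) := by
            rw [hEY]
            push_cast
            calc ∑ u ∈ N, (((Yᶜ : Finset V).filter (G.Adj u)).card : ℝ)
                < ∑ _u ∈ N, h := sum_lt_sum_of_nonempty hNne hall
              _ = (N.card : ℝ) * h := by rw [sum_const, nsmul_eq_mul]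
              _ = h * (N.card : ℝ) := mul_comm _ _
          rw [hYcard] at hchY
          push_cast at hchY
          nlinarith
        obtain ⟨u, huN, hu⟩ := hexists
        have huN' := (mem_extNbhd G).1 huN
        obtain ⟨huX, x, hxX, hadj⟩ := huN'
        refine ⟨insert u X, mem_insert_of_mem hvX, ?_, ?_, ?_⟩
        · rw [card_insert_of_notMem huX, hcard]
        · have hc2 := SimpleGraph.connected_induce_union hconn.preconnected
            (induce_singleton_connected G u).preconnected hxX (Set.mem_singleton u) hadj
          rw [Set.union_singleton] at hc2
          rw [coe_insert]
          exact hc2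
        · have hsub : (N.erase u) ∪ ((Yᶜ : Finset V).filter (G.Adj u))
              ⊆ extNbhd G (insert u X) := by
            intro w hw
            rw [mem_union] at hw
            rw [mem_extNbhd]
            rcases hw with hw | hw
            · obtain ⟨hwu, hwN⟩ := mem_erase.1 hw
              obtain ⟨hwX, x', hx', hadj'⟩ := (mem_extNbhd G).1 hwN
              refine ⟨?_, x', mem_insert_of_mem hx', hadj'⟩
              rw [mem_insert]
              push_neg
              exact ⟨hwu, hwX⟩
            · obtain ⟨hwY, hadj'⟩ := mem_filter.1 hw
              have hwY' : w ∉ Y := mem_compl.1 hwY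
              have hwX : w ∉ X := fun hc => hwY' (by rw [hY]; exact mem_union_left _ hc)
              have hwu : w ≠ u := fun hc => hwY' (by rw [hY]; exact mem_union_right _ (hc ▸ huN))
              refine ⟨?_, u, mem_insert_self u X, hadj'⟩
              rw [mem_insert]
              push_neg
              exact ⟨hwu, hwX⟩
          have hdisj2 : Disjoint (N.erase u) ((Yᶜ : Finset V).filter (G.Adj u)) := by
            rw [disjoint_left]
            intro a ha ha'
            have h1 : a ∈ Y := by rw [hY]; exact mem_union_right _ (erase_subset _ _ ha)
            exact (mem_compl.1 (mem_filter.1 ha').1) h1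
          have hcards : (N.card - 1) + ((Yᶜ : Finset V).filter (G.Adj u)).card
              ≤ (extNbhd G (insert u X)).card := by
            have hcc := card_le_card hsub
            rwa [card_union_of_disjoint hdisj2, card_erase_of_mem huN] at hcc
          have hm1 : 1 ≤ N.card := card_pos.2 hNne
          have hcast : ((N.card : ℝ) - 1) + (((Yᶜ : Finset V).filter (G.Adj u)).card : ℝ)
              ≤ ((extNbhd G (insert u X)).card : ℝ) := by
            have h' : (((N.card - 1 + ((Yᶜ : Finset V).filter (G.Adj u)).card : ℕ)) : ℝ)
                ≤ ((extNbhd G (insert u X)).card : ℝ) := by exact_mod_cast hcards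
            rwa [Nat.cast_add, Nat.cast_sub hm1, Nat.cast_one] at h'
          push_cast
          nlinarith
  obtain ⟨X, hX1, hX2, hX3, hX4⟩ := key s hs1 le_rfl
  exact ⟨X, hX1, hX2, hX3, hX4⟩
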